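/- Let (A⊗V,μ_{A⊗V}) be a weak crossed product with preunit ν:K→A⊗V. Then ψ=μ_{A⊗V}∘(η_A⊗V⊗β_ν), σ=μ_{A⊗V}∘(η_A⊗V⊗η_A⊗V), and ∇_{A⊗V}∘ν=ν, where β_ν=(μ_A⊗V)∘(A⊗ν). -/

import Mathlib

open CategoryTheory MonoidalCategory

universe v u

namespace WeakCrossed

variable {C : Type u} [Category.{v} C] [MonoidalCategory C]

/-- The monoid axioms for a triple `(A, η, μ)` in a monoidal category. -/
def IsMon (A : C) (eta : 𝟙_ C ⟶ A) (mu : A ⊗ A ⟶ A) : Prop :=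
  (eta ▷ A) ≫ mu = (λ_ A).hom ∧ (A ◁ eta) ≫ mu = (ρ_ A).hom ∧
    (mu ▷ A) ≫ mu = (α_ A A A).hom ≫ (A ◁ mu) ≫ mu

/-- The morphism `(μ_A ⊗ Y) ∘ (A ⊗ f) : (A ⊗ X) ⊗ Z ⟶ A ⊗ Y` for `f : X ⊗ Z ⟶ A ⊗ Y`. -/
def phi (A : C) {X Z Y : C} (mu : A ⊗ A ⟶ A) (f : X ⊗ Z ⟶ A ⊗ Y) :
    (A ⊗ X) ⊗ Z ⟶ A ⊗ Y :=
  (α_ A X Z).hom ≫ (A ◁ f) ≫ (α_ A A Y).inv ≫ (mu ▷ Y)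

/-- The measuring condition `(μ_A ⊗ V) ∘ (A ⊗ ψ) ∘ (ψ ⊗ A) = ψ ∘ (V ⊗ μ_A)`. -/
def Measuring (A V : C) (mu : A ⊗ A ⟶ A) (psi : V ⊗ A ⟶ A ⊗ V) : Prop :=
  (psi ▷ A) ≫ phi A mu psi = (α_ V A A).hom ≫ (V ◁ mu) ≫ psi

/-- The idempotent `∇_{A⊗V} = (μ_A ⊗ V) ∘ (A ⊗ ψ) ∘ (A ⊗ V ⊗ η_A)`. -/
def nabla (A V : C) (eta : 𝟙_ C ⟶ A) (mu : A ⊗ A ⟶ A) (psi : V ⊗ A ⟶ A ⊗ V) :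
    A ⊗ V ⟶ A ⊗ V :=
  (ρ_ (A ⊗ V)).inv ≫ ((A ⊗ V) ◁ eta) ≫ phi A mu psi

/-- The twisted condition
`(μ_A ⊗ V) ∘ (A ⊗ ψ) ∘ (σ ⊗ A) = (μ_A ⊗ V) ∘ (A ⊗ σ) ∘ (ψ ⊗ V) ∘ (V ⊗ ψ)`. -/
def Twisted (A V : C) (mu : A ⊗ A ⟶ A) (psi : V ⊗ A ⟶ A ⊗ V)
    (sig : V ⊗ V ⟶ A ⊗ V) : Prop :=
  (sig ▷ A) ≫ phi A mu psi =
    (α_ V V A).hom ≫ (V ◁ psi) ≫ (α_ V A V).inv ≫ (psi ▷ V) ≫ phi A mu sig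

/-- The cocycle condition
`(μ_A ⊗ V) ∘ (A ⊗ σ) ∘ (σ ⊗ V) = (μ_A ⊗ V) ∘ (A ⊗ σ) ∘ (ψ ⊗ V) ∘ (V ⊗ σ)`. -/
def Cocycle (A V : C) (mu : A ⊗ A ⟶ A) (psi : V ⊗ A ⟶ A ⊗ V)
    (sig : V ⊗ V ⟶ A ⊗ V) : Prop :=
  (sig ▷ V) ≫ phi A mu sig =
    (α_ V V V).hom ≫ (V ◁ sig) ≫ (α_ V A V).inv ≫ (psi ▷ V) ≫ phi A mu sig

/-- The weak crossed product multiplication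
`μ_{A⊗V} = (μ_A ⊗ V) ∘ (μ_A ⊗ σ) ∘ (A ⊗ ψ ⊗ V)`. -/
def prodAV (A V : C) (mu : A ⊗ A ⟶ A) (psi : V ⊗ A ⟶ A ⊗ V)
    (sig : V ⊗ V ⟶ A ⊗ V) : (A ⊗ V) ⊗ (A ⊗ V) ⟶ A ⊗ V :=
  (α_ A V (A ⊗ V)).hom ≫ (A ◁ ((α_ V A V).inv ≫ (psi ▷ V) ≫ (α_ A V V).hom)) ≫
    (α_ A A (V ⊗ V)).inv ≫ (mu ⊗ₘ sig) ≫ (α_ A A V).inv ≫ (mu ▷ V)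

/-- The morphism `η_A ⊗ V : V ⟶ A ⊗ V`. -/
def etaT (A V : C) (eta : 𝟙_ C ⟶ A) : V ⟶ A ⊗ V := (λ_ V).inv ≫ (eta ▷ V)

/-- The morphism `β_ν = (μ_A ⊗ V) ∘ (A ⊗ ν) : A ⟶ A ⊗ V`. -/
def beta (A V : C) (mu : A ⊗ A ⟶ A) (nu : 𝟙_ C ⟶ A ⊗ V) : A ⟶ A ⊗ V :=
  (ρ_ A).inv ≫ (A ◁ nu) ≫ (α_ A A V).inv ≫ (mu ▷ V)

/-- Preunit condition (pre1):
`(μ_A ⊗ V) ∘ (A ⊗ σ) ∘ (ψ ⊗ V) ∘ (V ⊗ ν) = ∇_{A⊗V} ∘ (η_A ⊗ V)`. -/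
def Pre1 (A V : C) (eta : 𝟙_ C ⟶ A) (mu : A ⊗ A ⟶ A) (psi : V ⊗ A ⟶ A ⊗ V)
    (sig : V ⊗ V ⟶ A ⊗ V) (nu : 𝟙_ C ⟶ A ⊗ V) : Prop :=
  (ρ_ V).inv ≫ (V ◁ nu) ≫ (α_ V A V).inv ≫ (psi ▷ V) ≫ phi A mu sig =
    etaT A V eta ≫ nabla A V eta mu psi

/-- Preunit condition (pre2):
`(μ_A ⊗ V) ∘ (A ⊗ σ) ∘ (ν ⊗ V) = ∇_{A⊗V} ∘ (η_A ⊗ V)`. -/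
def Pre2 (A V : C) (eta : 𝟙_ C ⟶ A) (mu : A ⊗ A ⟶ A) (psi : V ⊗ A ⟶ A ⊗ V)
    (sig : V ⊗ V ⟶ A ⊗ V) (nu : 𝟙_ C ⟶ A ⊗ V) : Prop :=
  (λ_ V).inv ≫ (nu ▷ V) ≫ phi A mu sig = etaT A V eta ≫ nabla A V eta mu psi

/-- Preunit condition (pre3): `(μ_A ⊗ V) ∘ (A ⊗ ψ) ∘ (ν ⊗ A) = β_ν`. -/
def Pre3 (A V : C) (mu : A ⊗ A ⟶ A) (psi : V ⊗ A ⟶ A ⊗ V)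
    (nu : 𝟙_ C ⟶ A ⊗ V) : Prop :=
  (λ_ A).inv ≫ (nu ▷ A) ≫ phi A mu psi = beta A V mu nu

/-- `(A ⊗ V, μ_{A⊗V})` is a weak crossed product: measuring, twisted and cocycle
conditions hold and `∇_{A⊗V} ∘ σ = σ`. -/
def WCP (A V : C) (eta : 𝟙_ C ⟶ A) (mu : A ⊗ A ⟶ A) (psi : V ⊗ A ⟶ A ⊗ V)
    (sig : V ⊗ V ⟶ A ⊗ V) : Prop :=
  Measuring A V mu psi ∧ Twisted A V mu psi sig ∧ Cocycle A V mu psi sig ∧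
    sig ≫ nabla A V eta mu psi = sig

/-- `(A ⊗ V, μ_{A⊗V})` is a weak crossed product with preunit `ν`. -/
def WCPpre (A V : C) (eta : 𝟙_ C ⟶ A) (mu : A ⊗ A ⟶ A) (psi : V ⊗ A ⟶ A ⊗ V)
    (sig : V ⊗ V ⟶ A ⊗ V) (nu : 𝟙_ C ⟶ A ⊗ V) : Prop :=
  WCP A V eta mu psi sig ∧ Pre1 A V eta mu psi sig nu ∧
    Pre2 A V eta mu psi sig nu ∧ Pre3 A V mu psi nu

/-- `(μ_A ⊗ Y) ∘ (A ⊗ γ) : A ⊗ X ⟶ A ⊗ Y` for `γ : X ⟶ A ⊗ Y`. -/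
def tmap (A : C) {X Y : C} (mu : A ⊗ A ⟶ A) (g : X ⟶ A ⊗ Y) : A ⊗ X ⟶ A ⊗ Y :=
  (A ◁ g) ≫ (α_ A A Y).inv ≫ (mu ▷ Y)

/-- Left `A`-linearity of `T : A ⊗ X ⟶ A ⊗ Y`:
`T ∘ (μ_A ⊗ X) = (μ_A ⊗ Y) ∘ (A ⊗ T)`. -/
def LeftLin (A : C) {X Y : C} (mu : A ⊗ A ⟶ A) (T : A ⊗ X ⟶ A ⊗ Y) : Prop :=
  (mu ▷ X) ≫ T = (α_ A A X).hom ≫ (A ◁ T) ≫ (α_ A A Y).inv ≫ (mu ▷ Y)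

/-- `ν` is a preunit for the associative product `m` on `X`. -/
def IsPreunit {X : C} (m : X ⊗ X ⟶ X) (nu : 𝟙_ C ⟶ X) : Prop :=
  (ρ_ X).inv ≫ (X ◁ nu) ≫ m = (λ_ X).inv ≫ (nu ▷ X) ≫ m ∧
  (ρ_ X).inv ≫ (X ◁ nu) ≫ m =
    (ρ_ X).inv ≫ (X ◁ ((λ_ (𝟙_ C)).inv ≫ (nu ⊗ₘ nu) ≫ m)) ≫ m

/-- Brzeziński normalization conditions: `ψ ∘ (η_V ⊗ A) = A ⊗ η_V`,
`ψ ∘ (V ⊗ η_A) = η_A ⊗ V`, `σ ∘ (η_V ⊗ V) = σ ∘ (V ⊗ η_V) = η_A ⊗ V`. -/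
def BrzNorm (A V : C) (eta : 𝟙_ C ⟶ A) (etaV : 𝟙_ C ⟶ V) (psi : V ⊗ A ⟶ A ⊗ V)
    (sig : V ⊗ V ⟶ A ⊗ V) : Prop :=
  (λ_ A).inv ≫ (etaV ▷ A) ≫ psi = (ρ_ A).inv ≫ (A ◁ etaV) ∧
  (ρ_ V).inv ≫ (V ◁ eta) ≫ psi = (λ_ V).inv ≫ (eta ▷ V) ∧
  (λ_ V).inv ≫ (etaV ▷ V) ≫ sig = (λ_ V).inv ≫ (eta ▷ V) ∧
  (ρ_ V).inv ≫ (V ◁ etaV) ≫ sig = (λ_ V).inv ≫ (eta ▷ V)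


/-! ### Auxiliary lemmas -/

lemma whisk_tmap (A : C) (mu : A ⊗ A ⟶ A) {X X' Y : C} (w : X' ⟶ X) (g : X ⟶ A ⊗ Y) :
    (A ◁ w) ≫ tmap A mu g = tmap A mu (w ≫ g) := by
  simp [tmap]

lemma eta_tmap (A : C) (eta : 𝟙_ C ⟶ A) (mu : A ⊗ A ⟶ A)
    (hl : (eta ▷ A) ≫ mu = (λ_ A).hom) {X Y : C} (g : X ⟶ A ⊗ Y) :
    etaT A X eta ≫ tmap A mu g = g := by
  calc etaT A X eta ≫ tmap A mu g
      = g ≫ (λ_ (A ⊗ Y)).inv ≫ (α_ (𝟙_ C) A Y).inv ≫ (((eta ▷ A) ≫ mu) ▷ Y) := by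
        simp only [tmap, etaT, comp_whiskerRight, Category.assoc]
        rw [← whisker_exchange_assoc]
        monoidal
    _ = g := by rw [hl]; monoidal

lemma mu_tmap (A : C) (mu : A ⊗ A ⟶ A)
    (hassoc : (mu ▷ A) ≫ mu = (α_ A A A).hom ≫ (A ◁ mu) ≫ mu)
    {X Y : C} (g : X ⟶ A ⊗ Y) :
    (mu ▷ X) ≫ tmap A mu g =
      (α_ A A X).hom ≫ (A ◁ tmap A mu g) ≫ (α_ A A Y).inv ≫ (mu ▷ Y) := by
  calc (mu ▷ X) ≫ tmap A mu g
      = ((A ⊗ A) ◁ g) ≫ (α_ (A ⊗ A) A Y).inv ≫ (((mu ▷ A) ≫ mu) ▷ Y) := by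
        simp only [tmap, comp_whiskerRight, Category.assoc]
        rw [← whisker_exchange_assoc]
        monoidal
    _ = ((A ⊗ A) ◁ g) ≫ (α_ (A ⊗ A) A Y).inv ≫
          (((α_ A A A).hom ≫ (A ◁ mu) ≫ mu) ▷ Y) := by rw [hassoc]
    _ = (α_ A A X).hom ≫ (A ◁ tmap A mu g) ≫ (α_ A A Y).inv ≫ (mu ▷ Y) := by
        simp only [tmap, comp_whiskerRight, MonoidalCategory.whiskerLeft_comp,
          Category.assoc]
        monoidal

lemma tmapW (A : C) (mu : A ⊗ A ⟶ A)
    (hassoc : (mu ▷ A) ≫ mu = (α_ A A A).hom ≫ (A ◁ mu) ≫ mu)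
    {W Y Z U : C} (p : W ⟶ A ⊗ Y) (q : Y ⊗ Z ⟶ A ⊗ U) :
    ((tmap A mu p) ▷ Z) ≫ (α_ A Y Z).hom ≫ tmap A mu q =
      (α_ A W Z).hom ≫ tmap A mu ((p ▷ Z) ≫ (α_ A Y Z).hom ≫ tmap A mu q) := by
  calc ((tmap A mu p) ▷ Z) ≫ (α_ A Y Z).hom ≫ tmap A mu q
      = ((A ◁ p) ▷ Z) ≫ ((α_ A A Y).inv ▷ Z) ≫ (α_ (A ⊗ A) Y Z).hom ≫
          (mu ▷ (Y ⊗ Z)) ≫ tmap A mu q := by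
        simp only [tmap, comp_whiskerRight, Category.assoc]
        monoidal
    _ = ((A ◁ p) ▷ Z) ≫ ((α_ A A Y).inv ▷ Z) ≫ (α_ (A ⊗ A) Y Z).hom ≫
          (α_ A A (Y ⊗ Z)).hom ≫ (A ◁ tmap A mu q) ≫ (α_ A A U).inv ≫ (mu ▷ U) := by
        rw [mu_tmap A mu hassoc]
    _ = (α_ A W Z).hom ≫ tmap A mu ((p ▷ Z) ≫ (α_ A Y Z).hom ≫ tmap A mu q) := by
        simp only [tmap, comp_whiskerRight, MonoidalCategory.whiskerLeft_comp,
          Category.assoc]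
        monoidal

lemma phi_eq (A : C) {X Z Y : C} (mu : A ⊗ A ⟶ A) (f : X ⊗ Z ⟶ A ⊗ Y) :
    phi A mu f = (α_ A X Z).hom ≫ tmap A mu f := rfl

lemma beta_eq (A V : C) (mu : A ⊗ A ⟶ A) (nu : 𝟙_ C ⟶ A ⊗ V) :
    beta A V mu nu = (ρ_ A).inv ≫ tmap A mu nu := rfl

lemma nabla_eq (A V : C) (eta : 𝟙_ C ⟶ A) (mu : A ⊗ A ⟶ A) (psi : V ⊗ A ⟶ A ⊗ V) :
    nabla A V eta mu psi = tmap A mu ((ρ_ V).inv ≫ (V ◁ eta) ≫ psi) := by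
  simp only [nabla, phi, tmap, MonoidalCategory.whiskerLeft_comp, Category.assoc]
  monoidal

lemma etaT_absorb (A : C) (eta : 𝟙_ C ⟶ A) (mu : A ⊗ A ⟶ A)
    (hl : (eta ▷ A) ≫ mu = (λ_ A).hom) {X Z Y : C} (Q : X ⊗ Z ⟶ A ⊗ Y) :
    ((etaT A X eta) ▷ Z) ≫ (α_ A X Z).hom ≫ tmap A mu Q = Q := by
  have h1 : ((etaT A X eta) ▷ Z) ≫ (α_ A X Z).hom = etaT A (X ⊗ Z) eta := by
    simp only [etaT, comp_whiskerRight, Category.assoc]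
    monoidal
  rw [← Category.assoc, h1, eta_tmap A eta mu hl]

lemma prodAV_eq (A V : C) (mu : A ⊗ A ⟶ A) (psi : V ⊗ A ⟶ A ⊗ V)
    (sig : V ⊗ V ⟶ A ⊗ V)
    (hassoc : (mu ▷ A) ≫ mu = (α_ A A A).hom ≫ (A ◁ mu) ≫ mu) :
    prodAV A V mu psi sig = (α_ A V (A ⊗ V)).hom ≫ tmap A mu
      ((α_ V A V).inv ≫ (psi ▷ V) ≫ (α_ A V V).hom ≫ tmap A mu sig) := by
  calc prodAV A V mu psi sig
      = (α_ A V (A ⊗ V)).hom ≫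
          (A ◁ ((α_ V A V).inv ≫ (psi ▷ V) ≫ (α_ A V V).hom)) ≫
          (α_ A A (V ⊗ V)).inv ≫ (mu ▷ (V ⊗ V)) ≫ tmap A mu sig := by
        simp only [prodAV, tmap, MonoidalCategory.tensorHom_def, MonoidalCategory.whiskerLeft_comp,
          Category.assoc]
    _ = (α_ A V (A ⊗ V)).hom ≫
          (A ◁ ((α_ V A V).inv ≫ (psi ▷ V) ≫ (α_ A V V).hom)) ≫
          (α_ A A (V ⊗ V)).inv ≫ (α_ A A (V ⊗ V)).hom ≫ (A ◁ tmap A mu sig) ≫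
          (α_ A A V).inv ≫ (mu ▷ V) := by
        rw [mu_tmap A mu hassoc]
    _ = (α_ A V (A ⊗ V)).hom ≫ tmap A mu
          ((α_ V A V).inv ≫ (psi ▷ V) ≫ (α_ A V V).hom ≫ tmap A mu sig) := by
        simp only [tmap, MonoidalCategory.whiskerLeft_comp, Category.assoc]
        monoidal

lemma psi_nabla (A V : C) (eta : 𝟙_ C ⟶ A) (mu : A ⊗ A ⟶ A) (psi : V ⊗ A ⟶ A ⊗ V)
    (hmeas : Measuring A V mu psi) (hr : (A ◁ eta) ≫ mu = (ρ_ A).hom) :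
    psi ≫ nabla A V eta mu psi = psi := by
  have hm : (psi ▷ A) ≫ phi A mu psi = (α_ V A A).hom ≫ (V ◁ mu) ≫ psi := hmeas
  calc psi ≫ nabla A V eta mu psi
      = (ρ_ (V ⊗ A)).inv ≫ ((V ⊗ A) ◁ eta) ≫ (psi ▷ A) ≫ phi A mu psi := by
        rw [whisker_exchange_assoc]
        simp only [nabla, phi, MonoidalCategory.whiskerLeft_comp, Category.assoc]
        monoidal
    _ = (ρ_ (V ⊗ A)).inv ≫ ((V ⊗ A) ◁ eta) ≫ (α_ V A A).hom ≫ (V ◁ mu) ≫ psi := by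
        rw [hm]
    _ = (V ◁ ((ρ_ A).inv ≫ (A ◁ eta) ≫ mu)) ≫ psi := by
        simp only [MonoidalCategory.whiskerLeft_comp, Category.assoc]
        monoidal
    _ = psi := by rw [hr]; simp

/-- in a weak crossed product with preunit, `ψ`, `σ` and `ν` are
recovered from the product. -/
theorem psi_sigma_nu_recovered (A V : C) (eta : 𝟙_ C ⟶ A) (mu : A ⊗ A ⟶ A)
    (hA : IsMon A eta mu) (psi : V ⊗ A ⟶ A ⊗ V) (sig : V ⊗ V ⟶ A ⊗ V)
    (nu : 𝟙_ C ⟶ A ⊗ V) (h : WCPpre A V eta mu psi sig nu) :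
    psi = (etaT A V eta ⊗ₘ beta A V mu nu) ≫ prodAV A V mu psi sig ∧
    sig = (etaT A V eta ⊗ₘ etaT A V eta) ≫ prodAV A V mu psi sig ∧
    nu ≫ nabla A V eta mu psi = nu := by
  obtain ⟨hl, hr, hassoc⟩ := hA
  obtain ⟨⟨hmeas, htw, hcoc, hns⟩, hp1, hp2, hp3⟩ := h
  have hm : (psi ▷ A) ≫ phi A mu psi = (α_ V A A).hom ≫ (V ◁ mu) ≫ psi := hmeas
  have hc : (sig ▷ V) ≫ phi A mu sig =
      (α_ V V V).hom ≫ (V ◁ sig) ≫ (α_ V A V).inv ≫ (psi ▷ V) ≫ phi A mu sig := hcoc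
  have hpre1 : (ρ_ V).inv ≫ (V ◁ nu) ≫ (α_ V A V).inv ≫ (psi ▷ V) ≫ phi A mu sig =
      etaT A V eta ≫ nabla A V eta mu psi := hp1
  have hpre2 : (λ_ V).inv ≫ (nu ▷ V) ≫ phi A mu sig =
      etaT A V eta ≫ nabla A V eta mu psi := hp2
  have hpre3 : (λ_ A).inv ≫ (nu ▷ A) ≫ phi A mu psi = beta A V mu nu := hp3
  have hnab : nabla A V eta mu psi = tmap A mu ((ρ_ V).inv ≫ (V ◁ eta) ≫ psi) :=
    nabla_eq A V eta mu psi
  have hetanab : etaT A V eta ≫ nabla A V eta mu psi =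
      (ρ_ V).inv ≫ (V ◁ eta) ≫ psi := by
    rw [hnab, eta_tmap A eta mu hl]
  have hprod : prodAV A V mu psi sig = (α_ A V (A ⊗ V)).hom ≫ tmap A mu
      ((α_ V A V).inv ≫ (psi ▷ V) ≫ (α_ A V V).hom ≫ tmap A mu sig) :=
    prodAV_eq A V mu psi sig hassoc
  have hmeas' : (V ◁ mu) ≫ psi =
      (α_ V A A).inv ≫ (psi ▷ A) ≫ (α_ A V A).hom ≫ tmap A mu psi := by
    calc (V ◁ mu) ≫ psi
        = (α_ V A A).inv ≫ (α_ V A A).hom ≫ (V ◁ mu) ≫ psi := by simp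
      _ = (α_ V A A).inv ≫ (psi ▷ A) ≫ phi A mu psi := by rw [hm]
      _ = (α_ V A A).inv ≫ (psi ▷ A) ≫ (α_ A V A).hom ≫ tmap A mu psi := rfl
  -- Claim 3
  have hbeta' : eta ≫ beta A V mu nu = nu := by
    have h1 : eta ≫ (ρ_ A).inv = etaT A (𝟙_ C) eta := by
      simp only [etaT]; monoidal
    rw [beta_eq, ← Category.assoc, h1, eta_tmap A eta mu hl]
  have claim3 : nu ≫ nabla A V eta mu psi = nu := by
    have key : nu ≫ (ρ_ (A ⊗ V)).inv ≫ ((A ⊗ V) ◁ eta) =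
        eta ≫ (λ_ A).inv ≫ (nu ▷ A) := by
      calc nu ≫ (ρ_ (A ⊗ V)).inv ≫ ((A ⊗ V) ◁ eta)
          = (λ_ (𝟙_ C)).inv ≫ (nu ▷ (𝟙_ C)) ≫ ((A ⊗ V) ◁ eta) := by monoidal
        _ = (λ_ (𝟙_ C)).inv ≫ ((𝟙_ C) ◁ eta) ≫ (nu ▷ A) := by
            rw [whisker_exchange]
        _ = eta ≫ (λ_ A).inv ≫ (nu ▷ A) := by monoidal
    calc nu ≫ nabla A V eta mu psi
        = (nu ≫ (ρ_ (A ⊗ V)).inv ≫ ((A ⊗ V) ◁ eta)) ≫ phi A mu psi := by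
          simp only [nabla, Category.assoc]
      _ = (eta ≫ (λ_ A).inv ≫ (nu ▷ A)) ≫ phi A mu psi := by rw [key]
      _ = eta ≫ beta A V mu nu := by
          simp only [Category.assoc]; rw [hpre3]
      _ = nu := hbeta'
  -- Claim 1
  have step2 : (V ◁ beta A V mu nu) ≫
      ((α_ V A V).inv ≫ (psi ▷ V) ≫ (α_ A V V).hom ≫ tmap A mu sig) =
      psi ≫ tmap A mu
        ((ρ_ V).inv ≫ (V ◁ nu) ≫ (α_ V A V).inv ≫ (psi ▷ V) ≫ phi A mu sig) := by
    calc (V ◁ beta A V mu nu) ≫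
        ((α_ V A V).inv ≫ (psi ▷ V) ≫ (α_ A V V).hom ≫ tmap A mu sig)
        = (V ◁ (ρ_ A).inv) ≫ (V ◁ (A ◁ nu)) ≫ (V ◁ (α_ A A V).inv) ≫
            (α_ V (A ⊗ A) V).inv ≫ (((V ◁ mu) ≫ psi) ▷ V) ≫
            (α_ A V V).hom ≫ tmap A mu sig := by
          simp only [beta, MonoidalCategory.whiskerLeft_comp, comp_whiskerRight,
            Category.assoc]
          monoidal
      _ = (V ◁ (ρ_ A).inv) ≫ (V ◁ (A ◁ nu)) ≫ (V ◁ (α_ A A V).inv) ≫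
            (α_ V (A ⊗ A) V).inv ≫
            (((α_ V A A).inv ≫ (psi ▷ A) ≫ (α_ A V A).hom ≫ tmap A mu psi) ▷ V) ≫
            (α_ A V V).hom ≫ tmap A mu sig := by rw [hmeas']
      _ = (V ◁ (ρ_ A).inv) ≫ (V ◁ (A ◁ nu)) ≫ (V ◁ (α_ A A V).inv) ≫
            (α_ V (A ⊗ A) V).inv ≫ ((α_ V A A).inv ▷ V) ≫ ((psi ▷ A) ▷ V) ≫
            ((α_ A V A).hom ▷ V) ≫ (α_ A (V ⊗ A) V).hom ≫
            tmap A mu ((psi ▷ V) ≫ (α_ A V V).hom ≫ tmap A mu sig) := by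
          simp only [comp_whiskerRight, Category.assoc]
          rw [tmapW A mu hassoc]
      _ = psi ≫ (A ◁ ((ρ_ V).inv ≫ (V ◁ nu) ≫ (α_ V A V).inv)) ≫
            tmap A mu ((psi ▷ V) ≫ (α_ A V V).hom ≫ tmap A mu sig) := by
          calc (V ◁ (ρ_ A).inv) ≫ (V ◁ (A ◁ nu)) ≫ (V ◁ (α_ A A V).inv) ≫
              (α_ V (A ⊗ A) V).inv ≫ ((α_ V A A).inv ▷ V) ≫ ((psi ▷ A) ▷ V) ≫
              ((α_ A V A).hom ▷ V) ≫ (α_ A (V ⊗ A) V).hom ≫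
              tmap A mu ((psi ▷ V) ≫ (α_ A V V).hom ≫ tmap A mu sig)
              = (ρ_ (V ⊗ A)).inv ≫ ((V ⊗ A) ◁ nu) ≫ (psi ▷ (A ⊗ V)) ≫
                  (α_ A V (A ⊗ V)).hom ≫ (A ◁ (α_ V A V).inv) ≫
                  tmap A mu ((psi ▷ V) ≫ (α_ A V V).hom ≫ tmap A mu sig) := by
                monoidal
            _ = psi ≫ (A ◁ ((ρ_ V).inv ≫ (V ◁ nu) ≫ (α_ V A V).inv)) ≫
                  tmap A mu ((psi ▷ V) ≫ (α_ A V V).hom ≫ tmap A mu sig) := by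
                rw [whisker_exchange_assoc]
                simp only [MonoidalCategory.whiskerLeft_comp, Category.assoc]
                monoidal
      _ = psi ≫ tmap A mu
            ((ρ_ V).inv ≫ (V ◁ nu) ≫ (α_ V A V).inv ≫ (psi ▷ V) ≫ phi A mu sig) := by
          rw [whisk_tmap]
          simp only [phi_eq, Category.assoc]
  have claim1 : (etaT A V eta ⊗ₘ beta A V mu nu) ≫ prodAV A V mu psi sig = psi := by
    calc (etaT A V eta ⊗ₘ beta A V mu nu) ≫ prodAV A V mu psi sig
        = (V ◁ beta A V mu nu) ≫ (etaT A V eta ▷ (A ⊗ V)) ≫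
            (α_ A V (A ⊗ V)).hom ≫ tmap A mu
            ((α_ V A V).inv ≫ (psi ▷ V) ≫ (α_ A V V).hom ≫ tmap A mu sig) := by
          rw [hprod, MonoidalCategory.tensorHom_def']
          simp only [Category.assoc]
      _ = (V ◁ beta A V mu nu) ≫
            ((α_ V A V).inv ≫ (psi ▷ V) ≫ (α_ A V V).hom ≫ tmap A mu sig) := by
          rw [etaT_absorb A eta mu hl]
      _ = psi ≫ tmap A mu
            ((ρ_ V).inv ≫ (V ◁ nu) ≫ (α_ V A V).inv ≫ (psi ▷ V) ≫ phi A mu sig) :=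
          step2
      _ = psi ≫ tmap A mu ((ρ_ V).inv ≫ (V ◁ eta) ≫ psi) := by rw [hpre1, hetanab]
      _ = psi := by rw [← hnab, psi_nabla A V eta mu psi hmeas hr]
  -- Claim 2
  have hpsi0nu : (λ_ V).inv ≫ (nu ▷ V) ≫ phi A mu sig =
      (ρ_ V).inv ≫ (V ◁ eta) ≫ psi := by rw [hpre2, hetanab]
  have hc' : (sig ▷ V) ≫ (α_ A V V).hom ≫ tmap A mu sig =
      (α_ V V V).hom ≫ (V ◁ sig) ≫ (α_ V A V).inv ≫ (psi ▷ V) ≫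
        (α_ A V V).hom ≫ tmap A mu sig := by
    simpa only [phi_eq, Category.assoc] using hc
  have hinner : (nu ▷ V) ≫ (α_ A V V).hom ≫ tmap A mu sig =
      (λ_ V).hom ≫ (ρ_ V).inv ≫ (V ◁ eta) ≫ psi := by
    rw [← hpsi0nu]
    simp only [phi_eq, Iso.hom_inv_id_assoc, Category.assoc]
  have hG : (λ_ (A ⊗ V)).inv ≫ (nu ▷ (A ⊗ V)) ≫ (α_ A V (A ⊗ V)).hom ≫
      tmap A mu ((α_ V A V).inv ≫ (psi ▷ V) ≫ (α_ A V V).hom ≫ tmap A mu sig) =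
      nabla A V eta mu psi := by
    have hX : (((λ_ A).inv ≫ (nu ▷ A) ≫ (α_ A V A).hom ≫ tmap A mu psi) ▷ V) ≫
        (α_ A V V).hom ≫ tmap A mu sig =
        (((λ_ A).inv ≫ (nu ▷ A) ≫ (α_ A V A).hom) ▷ V) ≫ (α_ A (V ⊗ A) V).hom ≫
          tmap A mu ((psi ▷ V) ≫ (α_ A V V).hom ≫ tmap A mu sig) := by
      simp only [comp_whiskerRight, Category.assoc]
      rw [tmapW A mu hassoc]
    have hL : (λ_ (A ⊗ V)).inv ≫ (nu ▷ (A ⊗ V)) ≫ (α_ A V (A ⊗ V)).hom ≫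
        tmap A mu ((α_ V A V).inv ≫ (psi ▷ V) ≫ (α_ A V V).hom ≫ tmap A mu sig) =
        (((λ_ A).inv ≫ (nu ▷ A) ≫ (α_ A V A).hom) ▷ V) ≫ (α_ A (V ⊗ A) V).hom ≫
          tmap A mu ((psi ▷ V) ≫ (α_ A V V).hom ≫ tmap A mu sig) := by
      rw [← whisk_tmap A mu ((α_ V A V).inv)]
      simp only [tmap, comp_whiskerRight, MonoidalCategory.whiskerLeft_comp,
        Category.assoc]
      monoidal
    have hpre3' : (λ_ A).inv ≫ (nu ▷ A) ≫ (α_ A V A).hom ≫ tmap A mu psi =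
        beta A V mu nu := by simpa only [phi_eq, Category.assoc] using hpre3
    rw [hL, ← hX, hpre3', beta_eq]
    calc (((ρ_ A).inv ≫ tmap A mu nu) ▷ V) ≫ (α_ A V V).hom ≫ tmap A mu sig
        = ((ρ_ A).inv ▷ V) ≫ (α_ A (𝟙_ C) V).hom ≫
            tmap A mu ((nu ▷ V) ≫ (α_ A V V).hom ≫ tmap A mu sig) := by
          simp only [comp_whiskerRight, Category.assoc]
          rw [tmapW A mu hassoc]
      _ = ((ρ_ A).inv ▷ V) ≫ (α_ A (𝟙_ C) V).hom ≫ (A ◁ (λ_ V).hom) ≫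
            tmap A mu ((ρ_ V).inv ≫ (V ◁ eta) ≫ psi) := by
          rw [hinner, ← whisk_tmap]
      _ = nabla A V eta mu psi := by
          rw [hnab]
          simp only [tmap, MonoidalCategory.whiskerLeft_comp, Category.assoc]
          monoidal
  have claim2 : (etaT A V eta ⊗ₘ etaT A V eta) ≫ prodAV A V mu psi sig = sig := by
    calc (etaT A V eta ⊗ₘ etaT A V eta) ≫ prodAV A V mu psi sig
        = (V ◁ etaT A V eta) ≫ (etaT A V eta ▷ (A ⊗ V)) ≫
            (α_ A V (A ⊗ V)).hom ≫ tmap A mu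
            ((α_ V A V).inv ≫ (psi ▷ V) ≫ (α_ A V V).hom ≫ tmap A mu sig) := by
          rw [hprod, MonoidalCategory.tensorHom_def']
          simp only [Category.assoc]
      _ = (V ◁ etaT A V eta) ≫
            ((α_ V A V).inv ≫ (psi ▷ V) ≫ (α_ A V V).hom ≫ tmap A mu sig) := by
          rw [etaT_absorb A eta mu hl]
      _ = (((ρ_ V).inv ≫ (V ◁ eta) ≫ psi) ▷ V) ≫ (α_ A V V).hom ≫
            tmap A mu sig := by
          simp only [etaT, MonoidalCategory.whiskerLeft_comp, comp_whiskerRight,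
            Category.assoc]
          monoidal
      _ = (((λ_ V).inv ≫ (nu ▷ V) ≫ (α_ A V V).hom ≫ tmap A mu sig) ▷ V) ≫
            (α_ A V V).hom ≫ tmap A mu sig := by
          rw [← hpsi0nu]
          simp only [phi_eq, Category.assoc]
      _ = ((λ_ V).inv ▷ V) ≫ ((nu ▷ V) ▷ V) ≫ ((α_ A V V).hom ▷ V) ≫
            (α_ A (V ⊗ V) V).hom ≫
            tmap A mu ((sig ▷ V) ≫ (α_ A V V).hom ≫ tmap A mu sig) := by
          simp only [comp_whiskerRight, Category.assoc]
          rw [tmapW A mu hassoc]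
      _ = ((λ_ V).inv ▷ V) ≫ ((nu ▷ V) ▷ V) ≫ ((α_ A V V).hom ▷ V) ≫
            (α_ A (V ⊗ V) V).hom ≫ (A ◁ (α_ V V V).hom) ≫ (A ◁ (V ◁ sig)) ≫
            tmap A mu ((α_ V A V).inv ≫ (psi ▷ V) ≫ (α_ A V V).hom ≫
              tmap A mu sig) := by
          rw [hc', ← whisk_tmap, ← whisk_tmap]
      _ = sig ≫ (λ_ (A ⊗ V)).inv ≫ (nu ▷ (A ⊗ V)) ≫ (α_ A V (A ⊗ V)).hom ≫
            tmap A mu ((α_ V A V).inv ≫ (psi ▷ V) ≫ (α_ A V V).hom ≫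
              tmap A mu sig) := by
          calc ((λ_ V).inv ▷ V) ≫ ((nu ▷ V) ▷ V) ≫ ((α_ A V V).hom ▷ V) ≫
              (α_ A (V ⊗ V) V).hom ≫ (A ◁ (α_ V V V).hom) ≫ (A ◁ (V ◁ sig)) ≫
              tmap A mu ((α_ V A V).inv ≫ (psi ▷ V) ≫ (α_ A V V).hom ≫
                tmap A mu sig)
              = (λ_ (V ⊗ V)).inv ≫ (nu ▷ (V ⊗ V)) ≫ ((A ⊗ V) ◁ sig) ≫
                  (α_ A V (A ⊗ V)).hom ≫
                  tmap A mu ((α_ V A V).inv ≫ (psi ▷ V) ≫ (α_ A V V).hom ≫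
                    tmap A mu sig) := by monoidal
            _ = sig ≫ (λ_ (A ⊗ V)).inv ≫ (nu ▷ (A ⊗ V)) ≫ (α_ A V (A ⊗ V)).hom ≫
                  tmap A mu ((α_ V A V).inv ≫ (psi ▷ V) ≫ (α_ A V V).hom ≫
                    tmap A mu sig) := by
                rw [← whisker_exchange_assoc]
                monoidal
      _ = sig ≫ nabla A V eta mu psi := by rw [hG]
      _ = sig := hns
  exact ⟨claim1.symm, claim2.symm, claim3⟩

end WeakCrossed
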